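/- Let F ⊆ ℕ² be a submonoid with extremal generators n₁, n₂, satisfying int(C) = int(F), F ∩ τᵢ = {k nᵢ : k ∈ ℕ} for i = 1, 2, and the Cohen-Macaulay condition. Let H = (ConvexHull({0, n₁, n₂, n₁+n₂}) \ (segment[0,n₁] ∪ segment[0,n₂] ∪ {n₁+n₂})) ∪ {0}, intersected with ℕ². Then F is 'Gorenstein' in the combinatorial sense—i.e., Ap(n₁) ∩ Ap(n₂) has a unique maximal element with respect to the order a ≤_F b iff b − a ∈ F—if and only if F ∩ H has a unique maximal element with respect to ≤_F. -/

import Mathlib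

def toQ (p : ℤ × ℤ) : ℚ × ℚ := ((p.1 : ℚ), (p.2 : ℚ))
def toR (p : ℤ × ℤ) : ℝ × ℝ := ((p.1 : ℝ), (p.2 : ℝ))
def isNat (p : ℤ × ℤ) : Prop := 0 ≤ p.1 ∧ 0 ≤ p.2
def inCone (n₁ n₂ a : ℤ × ℤ) : Prop :=
  ∃ q₁ q₂ : ℚ, 0 ≤ q₁ ∧ 0 ≤ q₂ ∧ toQ a = q₁ • toQ n₁ + q₂ • toQ n₂
def onRay (n a : ℤ × ℤ) : Prop := ∃ q : ℚ, 0 ≤ q ∧ toQ a = q • toQ n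

def HSet (n₁ n₂ : ℤ × ℤ) : Set (ℤ × ℤ) :=
  {a : ℤ × ℤ | isNat a ∧
    toR a ∈ convexHull ℝ {0, toR n₁, toR n₂, toR n₁ + toR n₂} ∧
    toR a ∉ segment ℝ 0 (toR n₁) ∪ segment ℝ 0 (toR n₂) ∪ {toR n₁ + toR n₂}} ∪ {0}

namespace S9

def det (n₁ n₂ : ℤ × ℤ) : ℤ := n₁.1 * n₂.2 - n₁.2 * n₂.1

noncomputable def c1 (n₁ n₂ a : ℤ × ℤ) : ℚ :=
  ((a.1 * n₂.2 - a.2 * n₂.1 : ℤ) : ℚ) / ((det n₁ n₂ : ℤ) : ℚ)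
noncomputable def c2 (n₁ n₂ a : ℤ × ℤ) : ℚ :=
  ((n₁.1 * a.2 - n₁.2 * a.1 : ℤ) : ℚ) / ((det n₁ n₂ : ℤ) : ℚ)

variable {n₁ n₂ : ℤ × ℤ}

lemma det_ne (hind : LinearIndependent ℚ ![toQ n₁, toQ n₂]) : det n₁ n₂ ≠ 0 := by
  rw [linearIndependent_fin2] at hind
  obtain ⟨h2, h3⟩ := hind
  simp only [Matrix.cons_val_one, Matrix.head_cons, Matrix.cons_val_zero] at h2 h3
  intro hd
  have hd' : (n₁.1 : ℚ) * n₂.2 - (n₁.2 : ℚ) * n₂.1 = 0 := by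
    have := congrArg (fun z : ℤ => (z : ℚ)) hd
    push_cast [det] at this
    linarith [this]
  by_cases h : (n₂.1 : ℚ) = 0
  · by_cases h' : (n₂.2 : ℚ) = 0
    · exact h2 (by simp [toQ, Prod.ext_iff, h, h'])
    · refine h3 ((n₁.2 : ℚ) / n₂.2) ?_
      have hn11 : (n₁.1 : ℚ) = 0 := by
        have : (n₁.1 : ℚ) * n₂.2 = 0 := by rw [h] at hd'; linarith
        rcases mul_eq_zero.1 this with h'' | h'' <;> [exact h''; exact absurd h'' h']
      simp only [toQ, Prod.ext_iff, Prod.smul_fst, Prod.smul_snd, smul_eq_mul]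
      constructor
      · rw [h, hn11]; ring
      · field_simp
  · refine h3 ((n₁.1 : ℚ) / n₂.1) ?_
    simp only [toQ, Prod.ext_iff, Prod.smul_fst, Prod.smul_snd, smul_eq_mul]
    constructor
    · field_simp
    · field_simp
      linarith [hd']

lemma repr (hd : det n₁ n₂ ≠ 0) (a : ℤ × ℤ) :
    toQ a = c1 n₁ n₂ a • toQ n₁ + c2 n₁ n₂ a • toQ n₂ := by
  have hdq : ((det n₁ n₂ : ℤ) : ℚ) ≠ 0 := Int.cast_ne_zero.2 hd
  simp only [toQ, Prod.ext_iff, Prod.fst_add, Prod.snd_add, Prod.smul_fst, Prod.smul_snd,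
    smul_eq_mul, c1, c2]
  push_cast [det] at hdq ⊢
  constructor <;> rw [div_mul_eq_mul_div, div_mul_eq_mul_div, ← add_div, eq_div_iff hdq] <;> ring

lemma uniqQ (hd : det n₁ n₂ ≠ 0) {a : ℤ × ℤ} {q₁ q₂ : ℚ}
    (h : toQ a = q₁ • toQ n₁ + q₂ • toQ n₂) : q₁ = c1 n₁ n₂ a ∧ q₂ = c2 n₁ n₂ a := by
  have hdq : ((det n₁ n₂ : ℤ) : ℚ) ≠ 0 := Int.cast_ne_zero.2 hd
  simp only [toQ, Prod.ext_iff, Prod.fst_add, Prod.snd_add, Prod.smul_fst, Prod.smul_snd,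
    smul_eq_mul] at h
  obtain ⟨h1, h2⟩ := h
  simp only [c1, c2]
  push_cast [det] at hdq ⊢
  constructor
  · rw [eq_div_iff hdq]
    linear_combination (-(n₂.2:ℚ)) * h1 + (n₂.1:ℚ) * h2
  · rw [eq_div_iff hdq]
    linear_combination (-(n₁.1:ℚ)) * h2 + (n₁.2:ℚ) * h1

lemma reprR (hd : det n₁ n₂ ≠ 0) (a : ℤ × ℤ) :
    toR a = ((c1 n₁ n₂ a : ℚ) : ℝ) • toR n₁ + ((c2 n₁ n₂ a : ℚ) : ℝ) • toR n₂ := by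
  have hdq : ((det n₁ n₂ : ℤ) : ℝ) ≠ 0 := Int.cast_ne_zero.2 hd
  simp only [toR, Prod.ext_iff, Prod.fst_add, Prod.snd_add, Prod.smul_fst, Prod.smul_snd,
    smul_eq_mul, c1, c2]
  push_cast [det] at hdq ⊢
  constructor <;> rw [div_mul_eq_mul_div, div_mul_eq_mul_div, ← add_div, eq_div_iff hdq] <;> ring

lemma uniqR (hd : det n₁ n₂ ≠ 0) {a : ℤ × ℤ} {α β : ℝ}
    (h : toR a = α • toR n₁ + β • toR n₂) :
    α = ((c1 n₁ n₂ a : ℚ) : ℝ) ∧ β = ((c2 n₁ n₂ a : ℚ) : ℝ) := by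
  have hdq : ((det n₁ n₂ : ℤ) : ℝ) ≠ 0 := Int.cast_ne_zero.2 hd
  simp only [toR, Prod.ext_iff, Prod.fst_add, Prod.snd_add, Prod.smul_fst, Prod.smul_snd,
    smul_eq_mul] at h
  obtain ⟨h1, h2⟩ := h
  simp only [c1, c2]
  push_cast [det] at hdq ⊢
  constructor
  · rw [eq_div_iff hdq]
    linear_combination (-(n₂.2:ℝ)) * h1 + (n₂.1:ℝ) * h2
  · rw [eq_div_iff hdq]
    linear_combination (-(n₁.1:ℝ)) * h2 + (n₁.2:ℝ) * h1

lemma mem_par {V : Type*} [AddCommGroup V] [Module ℝ V] (N₁ N₂ x : V) :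
    x ∈ convexHull ℝ {0, N₁, N₂, N₁ + N₂} ↔
      ∃ α β : ℝ, 0 ≤ α ∧ α ≤ 1 ∧ 0 ≤ β ∧ β ≤ 1 ∧ x = α • N₁ + β • N₂ := by
  constructor
  · intro hx
    have hP : Convex ℝ {y : V | ∃ α β : ℝ, 0 ≤ α ∧ α ≤ 1 ∧ 0 ≤ β ∧ β ≤ 1 ∧ y = α • N₁ + β • N₂} := by
      rintro y ⟨α₁, β₁, hα₁, hα₁', hβ₁, hβ₁', rfl⟩ z ⟨α₂, β₂, hα₂, hα₂', hβ₂, hβ₂', rfl⟩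
        a b ha hb hab
      refine ⟨a * α₁ + b * α₂, a * β₁ + b * β₂, by positivity, by nlinarith, by positivity,
        by nlinarith, by module⟩
    have hsub : ({0, N₁, N₂, N₁ + N₂} : Set V) ⊆
        {y : V | ∃ α β : ℝ, 0 ≤ α ∧ α ≤ 1 ∧ 0 ≤ β ∧ β ≤ 1 ∧ y = α • N₁ + β • N₂} := by
      rintro y (rfl | rfl | rfl | rfl)
      · exact ⟨0, 0, le_refl _, zero_le_one, le_refl _, zero_le_one, by module⟩
      · exact ⟨1, 0, zero_le_one, le_refl _, le_refl _, zero_le_one, by module⟩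
      · exact ⟨0, 1, le_refl _, zero_le_one, zero_le_one, le_refl _, by module⟩
      · exact ⟨1, 1, zero_le_one, le_refl _, zero_le_one, le_refl _, by module⟩
    exact convexHull_min hsub hP hx
  · rintro ⟨α, β, hα, hα', hβ, hβ', rfl⟩
    have h1 : β • N₂ ∈ convexHull ℝ ({0, N₁, N₂, N₁ + N₂} : Set V) :=
      segment_subset_convexHull (show (0:V) ∈ _ by simp) (show N₂ ∈ _ by simp)
        ⟨1 - β, β, by linarith, hβ, by ring, by module⟩
    have h2 : N₁ + β • N₂ ∈ convexHull ℝ ({0, N₁, N₂, N₁ + N₂} : Set V) :=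
      segment_subset_convexHull (show N₁ ∈ _ by simp) (show N₁ + N₂ ∈ _ by simp)
        ⟨1 - β, β, by linarith, hβ, by ring, by module⟩
    have := (convex_convexHull ℝ ({0, N₁, N₂, N₁ + N₂} : Set V)) h1 h2
      (by linarith : (0:ℝ) ≤ 1 - α) hα (by ring)
    convert this using 1
    module

lemma seg_mem_iff {V : Type*} [AddCommGroup V] [Module ℝ V] (N x : V) :
    x ∈ segment ℝ 0 N ↔ ∃ t : ℝ, 0 ≤ t ∧ t ≤ 1 ∧ x = t • N := by
  constructor
  · rintro ⟨a, b, ha, hb, hab, h⟩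
    exact ⟨b, hb, by linarith, by rw [← h]; module⟩
  · rintro ⟨t, ht, ht', rfl⟩
    exact ⟨1 - t, t, by linarith, ht, by ring, by module⟩

lemma inCone_iff (hd : det n₁ n₂ ≠ 0) (a : ℤ × ℤ) :
    inCone n₁ n₂ a ↔ 0 ≤ c1 n₁ n₂ a ∧ 0 ≤ c2 n₁ n₂ a := by
  constructor
  · rintro ⟨q₁, q₂, h₁, h₂, h⟩
    obtain ⟨e1, e2⟩ := uniqQ hd h
    exact ⟨e1 ▸ h₁, e2 ▸ h₂⟩
  · rintro ⟨h₁, h₂⟩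
    exact ⟨_, _, h₁, h₂, repr hd a⟩

lemma onRay₁_iff (hd : det n₁ n₂ ≠ 0) (a : ℤ × ℤ) :
    onRay n₁ a ↔ 0 ≤ c1 n₁ n₂ a ∧ c2 n₁ n₂ a = 0 := by
  constructor
  · rintro ⟨q, hq, h⟩
    have h' : toQ a = q • toQ n₁ + (0:ℚ) • toQ n₂ := by rw [h]; module
    obtain ⟨e1, e2⟩ := uniqQ hd h'
    exact ⟨e1 ▸ hq, e2.symm⟩
  · rintro ⟨h₁, h₂⟩
    refine ⟨c1 n₁ n₂ a, h₁, ?_⟩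
    have := repr hd a
    rw [h₂] at this
    rw [this]; module

lemma onRay₂_iff (hd : det n₁ n₂ ≠ 0) (a : ℤ × ℤ) :
    onRay n₂ a ↔ 0 ≤ c2 n₁ n₂ a ∧ c1 n₁ n₂ a = 0 := by
  constructor
  · rintro ⟨q, hq, h⟩
    have h' : toQ a = (0:ℚ) • toQ n₁ + q • toQ n₂ := by rw [h]; module
    obtain ⟨e1, e2⟩ := uniqQ hd h'
    exact ⟨e2 ▸ hq, e1.symm⟩
  · rintro ⟨h₁, h₂⟩
    refine ⟨c2 n₁ n₂ a, h₁, ?_⟩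
    have := repr hd a
    rw [h₂] at this
    rw [this]; module

lemma toR_injective : Function.Injective toR := by
  intro a b h
  simp only [toR, Prod.ext_iff] at h
  exact Prod.ext (by exact_mod_cast h.1) (by exact_mod_cast h.2)

lemma c1_sub (a b : ℤ × ℤ) : c1 n₁ n₂ (a - b) = c1 n₁ n₂ a - c1 n₁ n₂ b := by
  simp only [c1, Prod.fst_sub, Prod.snd_sub]
  push_cast
  ring

lemma c2_sub (a b : ℤ × ℤ) : c2 n₁ n₂ (a - b) = c2 n₁ n₂ a - c2 n₁ n₂ b := by
  simp only [c2, Prod.fst_sub, Prod.snd_sub]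
  push_cast
  ring

lemma c1_n₁ (hd : det n₁ n₂ ≠ 0) : c1 n₁ n₂ n₁ = 1 := by
  have hdq : ((det n₁ n₂ : ℤ) : ℚ) ≠ 0 := Int.cast_ne_zero.2 hd
  simp only [det] at hdq
  push_cast at hdq
  simp only [c1, det]
  push_cast
  exact div_self hdq

lemma c2_n₁ : c2 n₁ n₂ n₁ = 0 := by
  have h : (n₁.1 * n₁.2 - n₁.2 * n₁.1 : ℤ) = 0 := by ring
  simp [c2, h]

lemma c1_n₂ : c1 n₁ n₂ n₂ = 0 := by
  have h : (n₂.1 * n₂.2 - n₂.2 * n₂.1 : ℤ) = 0 := by ring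
  simp [c1, h]

lemma c2_n₂ (hd : det n₁ n₂ ≠ 0) : c2 n₁ n₂ n₂ = 1 := by
  have hdq : ((det n₁ n₂ : ℤ) : ℚ) ≠ 0 := Int.cast_ne_zero.2 hd
  simp only [det] at hdq
  push_cast at hdq
  simp only [c2, det]
  push_cast
  exact div_self hdq

lemma mem_HSet_iff (hd : det n₁ n₂ ≠ 0) (a : ℤ × ℤ) :
    a ∈ HSet n₁ n₂ ↔ a = 0 ∨ (isNat a ∧ 0 < c1 n₁ n₂ a ∧ c1 n₁ n₂ a ≤ 1 ∧
      0 < c2 n₁ n₂ a ∧ c2 n₁ n₂ a ≤ 1 ∧ ¬(c1 n₁ n₂ a = 1 ∧ c2 n₁ n₂ a = 1)) := by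
  constructor
  · rintro (⟨hna, hhull, hnot⟩ | h)
    · right
      obtain ⟨α, β, hα, hα', hβ, hβ', heq⟩ := (mem_par (toR n₁) (toR n₂) (toR a)).1 hhull
      obtain ⟨e1, e2⟩ := uniqR hd heq
      subst e1; subst e2
      simp only [Set.mem_union, not_or, Set.mem_singleton_iff] at hnot
      obtain ⟨⟨hs1, hs2⟩, hs3⟩ := hnot
      have hc1 : (0:ℚ) ≤ c1 n₁ n₂ a := by exact_mod_cast hα
      have hc1' : c1 n₁ n₂ a ≤ 1 := by exact_mod_cast hα'
      have hc2 : (0:ℚ) ≤ c2 n₁ n₂ a := by exact_mod_cast hβ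
      have hc2' : c2 n₁ n₂ a ≤ 1 := by exact_mod_cast hβ'
      have hc2pos : 0 < c2 n₁ n₂ a := by
        rcases lt_or_eq_of_le hc2 with h | h
        · exact h
        · exfalso
          apply hs1
          rw [(seg_mem_iff (toR n₁) (toR a))]
          refine ⟨((c1 n₁ n₂ a : ℚ) : ℝ), hα, hα', ?_⟩
          rw [heq, ← h]
          push_cast
          module
      have hc1pos : 0 < c1 n₁ n₂ a := by
        rcases lt_or_eq_of_le hc1 with h | h
        · exact h
        · exfalso
          apply hs2
          rw [(seg_mem_iff (toR n₂) (toR a))]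
          refine ⟨((c2 n₁ n₂ a : ℚ) : ℝ), hβ, hβ', ?_⟩
          rw [heq, ← h]
          push_cast
          module
      refine ⟨hna, hc1pos, hc1', hc2pos, hc2', ?_⟩
      rintro ⟨e1, e2⟩
      apply hs3
      rw [heq, e1, e2]
      push_cast
      module
    · left
      exact h
  · rintro (rfl | ⟨hna, h11, h12, h21, h22, hne⟩)
    · right; rfl
    · left
      refine ⟨hna, ?_, ?_⟩
      · exact (mem_par (toR n₁) (toR n₂) (toR a)).2
          ⟨_, _, by exact_mod_cast h11.le, by exact_mod_cast h12,
            by exact_mod_cast h21.le, by exact_mod_cast h22, reprR hd a⟩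
      · simp only [Set.mem_union, not_or, Set.mem_singleton_iff]
        refine ⟨⟨?_, ?_⟩, ?_⟩
        · intro hs
          obtain ⟨t, ht, ht', heq⟩ := (seg_mem_iff (toR n₁) (toR a)).1 hs
          have : toR a = t • toR n₁ + (0:ℝ) • toR n₂ := by rw [heq]; module
          obtain ⟨_, e2⟩ := uniqR hd this
          have : c2 n₁ n₂ a = 0 := by exact_mod_cast e2.symm
          linarith
        · intro hs
          obtain ⟨t, ht, ht', heq⟩ := (seg_mem_iff (toR n₂) (toR a)).1 hs
          have : toR a = (0:ℝ) • toR n₁ + t • toR n₂ := by rw [heq]; module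
          obtain ⟨e1, _⟩ := uniqR hd this
          have : c1 n₁ n₂ a = 0 := by exact_mod_cast e1.symm
          linarith
        · intro hs
          have : toR a = (1:ℝ) • toR n₁ + (1:ℝ) • toR n₂ := by rw [hs]; module
          obtain ⟨e1, e2⟩ := uniqR hd this
          exact hne ⟨by exact_mod_cast e1.symm, by exact_mod_cast e2.symm⟩

lemma toQ_injective : Function.Injective toQ := by
  intro a b h
  simp only [toQ, Prod.ext_iff] at h
  exact Prod.ext (by exact_mod_cast h.1) (by exact_mod_cast h.2)

lemma c1_nsmul₁ (hd : det n₁ n₂ ≠ 0) (k : ℕ) : c1 n₁ n₂ (k • n₁) = k := by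
  have h : toQ ((k : ℕ) • n₁) = (k : ℚ) • toQ n₁ + (0:ℚ) • toQ n₂ := by
    simp only [toQ, Prod.ext_iff, Prod.smul_fst, Prod.smul_snd, Prod.fst_add, Prod.snd_add]
    simp only [nsmul_eq_mul, smul_eq_mul]
    constructor <;> push_cast <;> ring
  exact ((uniqQ hd h).1).symm

lemma c2_nsmul₂ (hd : det n₁ n₂ ≠ 0) (k : ℕ) : c2 n₁ n₂ (k • n₂) = k := by
  have h : toQ ((k : ℕ) • n₂) = (0 : ℚ) • toQ n₁ + (k:ℚ) • toQ n₂ := by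
    simp only [toQ, Prod.ext_iff, Prod.smul_fst, Prod.smul_snd, Prod.fst_add, Prod.snd_add]
    simp only [nsmul_eq_mul, smul_eq_mul]
    constructor <;> push_cast <;> ring
  exact ((uniqQ hd h).2).symm

lemma isNat_of (hd : det n₁ n₂ ≠ 0) (hn1 : isNat n₁) (hn2 : isNat n₂) {t : ℤ × ℤ}
    (h1 : 0 ≤ c1 n₁ n₂ t) (h2 : 0 ≤ c2 n₁ n₂ t) : isNat t := by
  have := repr hd t
  simp only [toQ, Prod.ext_iff, Prod.fst_add, Prod.snd_add, Prod.smul_fst, Prod.smul_snd,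
    smul_eq_mul] at this
  obtain ⟨e1, e2⟩ := this
  obtain ⟨a1, a2⟩ := hn1
  obtain ⟨b1, b2⟩ := hn2
  constructor
  · have : (0:ℚ) ≤ (t.1 : ℚ) := by
      rw [e1]
      have := mul_nonneg h1 (show (0:ℚ) ≤ (n₁.1:ℚ) by exact_mod_cast a1)
      have := mul_nonneg h2 (show (0:ℚ) ≤ (n₂.1:ℚ) by exact_mod_cast b1)
      linarith
    exact_mod_cast this
  · have : (0:ℚ) ≤ (t.2 : ℚ) := by
      rw [e2]
      have := mul_nonneg h1 (show (0:ℚ) ≤ (n₁.2:ℚ) by exact_mod_cast a2)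
      have := mul_nonneg h2 (show (0:ℚ) ≤ (n₂.2:ℚ) by exact_mod_cast b2)
      linarith
    exact_mod_cast this



lemma toQ_add (a b : ℤ × ℤ) : toQ (a + b) = toQ a + toQ b := by
  simp only [toQ, Prod.ext_iff, Prod.fst_add, Prod.snd_add]
  push_cast
  exact ⟨rfl, rfl⟩

lemma setEq {F : AddSubmonoid (ℤ × ℤ)} {n₁ n₂ : ℤ × ℤ}
    (hnat : ∀ s ∈ F, isNat s)
    (hd : det n₁ n₂ ≠ 0)
    (hn₁ : n₁ ∈ F) (hn₂ : n₂ ∈ F)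
    (hcone : ∀ s ∈ F, inCone n₁ n₂ s)
    (hint : ∀ a : ℤ × ℤ,
      (isNat a ∧ inCone n₁ n₂ a ∧ ¬ onRay n₁ a ∧ ¬ onRay n₂ a) ↔
      (a ∈ F ∧ ¬ onRay n₁ a ∧ ¬ onRay n₂ a))
    (hτ₁ : ∀ a : ℤ × ℤ, (a ∈ F ∧ onRay n₁ a) ↔ ∃ k : ℕ, a = k • n₁)
    (hτ₂ : ∀ a : ℤ × ℤ, (a ∈ F ∧ onRay n₂ a) ↔ ∃ k : ℕ, a = k • n₂) :
    ({s : ℤ × ℤ | s ∈ F ∧ s - n₁ ∉ F} ∩ {s : ℤ × ℤ | s ∈ F ∧ s - n₂ ∉ F}) =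
      ({s : ℤ × ℤ | s ∈ F} ∩ HSet n₁ n₂) := by
  ext s
  simp only [Set.mem_inter_iff, Set.mem_setOf_eq]
  constructor
  · rintro ⟨⟨hsF, h1⟩, -, h2⟩
    refine ⟨hsF, ?_⟩
    rw [mem_HSet_iff hd]
    obtain ⟨hc1, hc2⟩ := (inCone_iff hd s).1 (hcone s hsF)
    by_cases hc2z : c2 n₁ n₂ s = 0
    · obtain ⟨k, hk⟩ := (hτ₁ s).1 ⟨hsF, (onRay₁_iff hd s).2 ⟨hc1, hc2z⟩⟩
      cases k with
      | zero => left; simpa using hk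
      | succ m =>
        exfalso
        apply h1
        have hm : s - n₁ = m • n₁ := by rw [hk, succ_nsmul]; abel
        exact ((hτ₁ (s - n₁)).2 ⟨m, hm⟩).1
    · by_cases hc1z : c1 n₁ n₂ s = 0
      · obtain ⟨k, hk⟩ := (hτ₂ s).1 ⟨hsF, (onRay₂_iff hd s).2 ⟨hc2, hc1z⟩⟩
        cases k with
        | zero => left; simpa using hk
        | succ m =>
          exfalso
          apply h2
          have hm : s - n₂ = m • n₂ := by rw [hk, succ_nsmul]; abel
          exact ((hτ₂ (s - n₂)).2 ⟨m, hm⟩).1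
      · right
        have hc1p : 0 < c1 n₁ n₂ s := lt_of_le_of_ne hc1 (Ne.symm hc1z)
        have hc2p : 0 < c2 n₁ n₂ s := lt_of_le_of_ne hc2 (Ne.symm hc2z)
        have key : ∀ t : ℤ × ℤ, 0 < c1 n₁ n₂ t → 0 < c2 n₁ n₂ t → t ∈ F := by
          intro t ht1 ht2
          have hray1 : ¬ onRay n₁ t := by
            rw [onRay₁_iff hd]; rintro ⟨-, h⟩; linarith
          have hray2 : ¬ onRay n₂ t := by
            rw [onRay₂_iff hd]; rintro ⟨-, h⟩; linarith
          exact ((hint t).1 ⟨isNat_of hd (hnat n₁ hn₁) (hnat n₂ hn₂) ht1.le ht2.le,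
            (inCone_iff hd t).2 ⟨ht1.le, ht2.le⟩, hray1, hray2⟩).1
        have hc1le : c1 n₁ n₂ s ≤ 1 := by
          by_contra hgt
          push_neg at hgt
          apply h1
          apply key
          · rw [c1_sub, c1_n₁ hd]; linarith
          · rw [c2_sub, c2_n₁]; linarith
        have hc2le : c2 n₁ n₂ s ≤ 1 := by
          by_contra hgt
          push_neg at hgt
          apply h2
          apply key
          · rw [c1_sub, c1_n₂]; linarith
          · rw [c2_sub, c2_n₂ hd]; linarith
        refine ⟨hnat s hsF, hc1p, hc1le, hc2p, hc2le, ?_⟩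
        rintro ⟨e1, e2⟩
        apply h1
        have hs : s = n₁ + n₂ := by
          apply toQ_injective
          have h := repr hd s
          rw [e1, e2, one_smul, one_smul] at h
          rw [toQ_add]
          exact h
        rw [hs, add_sub_cancel_left]
        exact hn₂
  · rintro ⟨hsF, hH⟩
    rw [mem_HSet_iff hd] at hH
    rcases hH with rfl | ⟨-, h11, h12, h21, h22, hne⟩
    · refine ⟨⟨hsF, ?_⟩, hsF, ?_⟩
      · intro hmem
        obtain ⟨a1, a2⟩ := hnat _ hmem
        obtain ⟨b1, b2⟩ := hnat n₁ hn₁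
        simp only [Prod.fst_sub, Prod.snd_sub, Prod.fst_zero, Prod.snd_zero] at a1 a2
        apply hd
        have e1 : n₁.1 = 0 := by omega
        have e2 : n₁.2 = 0 := by omega
        simp [det, e1, e2]
      · intro hmem
        obtain ⟨a1, a2⟩ := hnat _ hmem
        obtain ⟨b1, b2⟩ := hnat n₂ hn₂
        simp only [Prod.fst_sub, Prod.snd_sub, Prod.fst_zero, Prod.snd_zero] at a1 a2
        apply hd
        have e1 : n₂.1 = 0 := by omega
        have e2 : n₂.2 = 0 := by omega
        simp [det, e1, e2]
    · refine ⟨⟨hsF, ?_⟩, hsF, ?_⟩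
      · intro hmem
        obtain ⟨hc1', hc2'⟩ := (inCone_iff hd _).1 (hcone _ hmem)
        rw [c1_sub, c1_n₁ hd] at hc1'
        rw [c2_sub, c2_n₁] at hc2'
        have e1 : c1 n₁ n₂ s = 1 := le_antisymm h12 (by linarith)
        have hray : onRay n₂ (s - n₁) := (onRay₂_iff hd _).2
          ⟨by rw [c2_sub, c2_n₁]; linarith,
           by rw [c1_sub, c1_n₁ hd, e1]; ring⟩
        obtain ⟨k, hk⟩ := (hτ₂ _).1 ⟨hmem, hray⟩
        have hck : c2 n₁ n₂ (s - n₁) = k := by rw [hk]; exact c2_nsmul₂ hd k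
        rw [c2_sub, c2_n₁] at hck
        have e2 : c2 n₁ n₂ s = k := by linarith
        have hk1 : k = 1 := by
          have h0 : (0:ℚ) < (k:ℚ) := e2 ▸ h21
          have h1' : (k:ℚ) ≤ 1 := e2 ▸ h22
          have hb0 : 0 < k := by exact_mod_cast h0
          have hb1 : k ≤ 1 := by exact_mod_cast h1'
          omega
        exact hne ⟨e1, by rw [e2, hk1]; norm_num⟩
      · intro hmem
        obtain ⟨hc1', hc2'⟩ := (inCone_iff hd _).1 (hcone _ hmem)
        rw [c1_sub, c1_n₂] at hc1'
        rw [c2_sub, c2_n₂ hd] at hc2'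
        have e2 : c2 n₁ n₂ s = 1 := le_antisymm h22 (by linarith)
        have hray : onRay n₁ (s - n₂) := (onRay₁_iff hd _).2
          ⟨by rw [c1_sub, c1_n₂]; linarith,
           by rw [c2_sub, c2_n₂ hd, e2]; ring⟩
        obtain ⟨k, hk⟩ := (hτ₁ _).1 ⟨hmem, hray⟩
        have hck : c1 n₁ n₂ (s - n₂) = k := by rw [hk]; exact c1_nsmul₁ hd k
        rw [c1_sub, c1_n₂] at hck
        have e1 : c1 n₁ n₂ s = k := by linarith
        have hk1 : k = 1 := by
          have h0 : (0:ℚ) < (k:ℚ) := e1 ▸ h11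
          have h1' : (k:ℚ) ≤ 1 := e1 ▸ h12
          have hb0 : 0 < k := by exact_mod_cast h0
          have hb1 : k ≤ 1 := by exact_mod_cast h1'
          omega
        exact hne ⟨by rw [e1, hk1]; norm_num, e2⟩

end S9

/-- `m` is a maximal element of `X` with respect to the order `a ≤_F b ↔ b - a ∈ F`. -/
def IsMaxIn (F : AddSubmonoid (ℤ × ℤ)) (X : Set (ℤ × ℤ)) (m : ℤ × ℤ) : Prop :=
  m ∈ X ∧ ∀ x ∈ X, x - m ∈ F → x = m

/-- Corollary "corollary_igual_interior_Gorenstein": under the hypotheses,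
`Ap(n₁) ∩ Ap(n₂)` has a unique maximal element iff `F ∩ H` has a unique maximal element. -/
theorem stmt9 (F : AddSubmonoid (ℤ × ℤ)) (n₁ n₂ : ℤ × ℤ)
    (hnat : ∀ s ∈ F, isNat s)
    (hind : LinearIndependent ℚ ![toQ n₁, toQ n₂])
    (hn₁ : n₁ ∈ F) (hn₂ : n₂ ∈ F)
    (hcone : ∀ s ∈ F, inCone n₁ n₂ s)
    (hint : ∀ a : ℤ × ℤ,
      (isNat a ∧ inCone n₁ n₂ a ∧ ¬ onRay n₁ a ∧ ¬ onRay n₂ a) ↔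
      (a ∈ F ∧ ¬ onRay n₁ a ∧ ¬ onRay n₂ a))
    (hτ₁ : ∀ a : ℤ × ℤ, (a ∈ F ∧ onRay n₁ a) ↔ ∃ k : ℕ, a = k • n₁)
    (hτ₂ : ∀ a : ℤ × ℤ, (a ∈ F ∧ onRay n₂ a) ↔ ∃ k : ℕ, a = k • n₂)
    (hCM : ∀ a : ℤ × ℤ, isNat a → inCone n₁ n₂ a → a ∉ F → (a + n₁ ∉ F ∨ a + n₂ ∉ F)) :
    (∃! m : ℤ × ℤ, IsMaxIn F
        ({s : ℤ × ℤ | s ∈ F ∧ s - n₁ ∉ F} ∩ {s : ℤ × ℤ | s ∈ F ∧ s - n₂ ∉ F}) m) ↔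
    (∃! m : ℤ × ℤ, IsMaxIn F ({s : ℤ × ℤ | s ∈ F} ∩ HSet n₁ n₂) m) := by
  have hd : S9.det n₁ n₂ ≠ 0 := S9.det_ne hind
  rw [S9.setEq hnat hd hn₁ hn₂ hcone hint hτ₁ hτ₂]
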